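/- Let (V, #, ∗) be a hypervector space over a hyperfield (F, ⊕, ·) with zero vector θ, and let S = {α₁, α₂, ..., αₙ} ⊆ V. Then S is linearly dependent if and only if at least one vector αᵢ of S can be expressed as a linear combination of the remaining vectors of S, i.e., αᵢ ∈ HL(α₁, ..., α_{i−1}, α_{i+1}, ..., αₙ) for some i. -/

import Mathlib

universe u v

/-- A hyperfield: `(F, ⊕, ·)` where `(F, ⊕)` is a commutative hypergroup with zero
element `zero` (each `a` having a unique additive inverse `neg a`, and satisfying
reversibility), and `·` is an associative commutative multiplication distributing
over `⊕` from both sides, with `a·0 = 0·a = 0`, an identity `one` and multiplicative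
inverses for nonzero elements. -/
structure Hyperfield (F : Type u) where
  add : F → F → Set F
  add_nonempty : ∀ a b, (add a b).Nonempty
  add_comm : ∀ a b, add a b = add b a
  add_assoc : ∀ a b c, (⋃ t ∈ add b c, add a t) = ⋃ t ∈ add a b, add t c
  zero : F
  neg : F → F
  neg_spec : ∀ a, zero ∈ add a (neg a) ∧ zero ∈ add (neg a) a
  neg_unique : ∀ a b, zero ∈ add a b → zero ∈ add b a → b = neg a
  reversible : ∀ a b c, a ∈ add b c → b ∈ add a (neg c)
  mul : F → F → F
  mul_assoc : ∀ a b c, mul (mul a b) c = mul a (mul b c)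
  left_distrib : ∀ a b c, (mul a) '' (add b c) = add (mul a b) (mul a c)
  right_distrib : ∀ a b c, (fun t => mul t a) '' (add b c) = add (mul b a) (mul c a)
  mul_zero : ∀ a, mul a zero = zero
  zero_mul : ∀ a, mul zero a = zero
  one : F
  mul_one : ∀ a, mul a one = a
  one_ne_zero : one ≠ zero
  mul_comm : ∀ a b, mul a b = mul b a
  exists_inv : ∀ a, a ≠ zero → ∃ b, mul a b = one

/-- A hypervector space `(V, #, ∗)` over a hyperfield `K` on `F`:
`(V, #)` is a commutative hypergroup with zero vector `vzero`, and
`∗ : F × V → P*(V)` satisfies (i) `a ∗ (α # β) ⊆ a∗α # a∗β`,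
(ii) `(a ⊕ b) ∗ α ⊆ a∗α # b∗α`, (iii) `(a·b) ∗ α = a ∗ (b ∗ α)`,
(iv) `1 ∗ α = {α}` and `0 ∗ α = {θ}`. -/
structure HypervectorSpace (F : Type u) (V : Type v) (K : Hyperfield F) where
  vadd : V → V → Set V
  vadd_nonempty : ∀ x y, (vadd x y).Nonempty
  vadd_comm : ∀ x y, vadd x y = vadd y x
  vadd_assoc : ∀ x y z, (⋃ t ∈ vadd y z, vadd x t) = ⋃ t ∈ vadd x y, vadd t z
  vzero : V
  vneg : V → V
  vneg_spec : ∀ x, vzero ∈ vadd x (vneg x) ∧ vzero ∈ vadd (vneg x) x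
  vneg_unique : ∀ x y, vzero ∈ vadd x y → vzero ∈ vadd y x → y = vneg x
  vreversible : ∀ x y z, x ∈ vadd y z → y ∈ vadd x (vneg z)
  smul : F → V → Set V
  smul_nonempty : ∀ a x, (smul a x).Nonempty
  smul_vadd : ∀ a x y, (⋃ t ∈ vadd x y, smul a t) ⊆ ⋃ u ∈ smul a x, ⋃ w ∈ smul a y, vadd u w
  add_smul : ∀ a b x, (⋃ t ∈ K.add a b, smul t x) ⊆ ⋃ u ∈ smul a x, ⋃ w ∈ smul b x, vadd u w
  mul_smul : ∀ a b x, smul (K.mul a b) x = ⋃ t ∈ smul b x, smul a t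
  one_smul : ∀ x, smul K.one x = {x}
  zero_smul : ∀ x, smul K.zero x = {vzero}

namespace HypervectorSpace

variable {F : Type u} {V : Type v} {K : Hyperfield F}

/-- The hyperoperation `#` extended to subsets: `A # B = ⋃_{a ∈ A, b ∈ B} a # b`. -/
def setVadd (H : HypervectorSpace F V K) (A B : Set V) : Set V :=
  ⋃ a ∈ A, ⋃ b ∈ B, H.vadd a b

/-- A subset `W` of a hypervector space is a hypersubspace if it is closed under `#`
and `∗`, contains the zero vector, and contains additive inverses. -/
def IsHypersubspace (H : HypervectorSpace F V K) (W : Set V) : Prop :=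
  (∀ α ∈ W, ∀ β ∈ W, H.vadd α β ⊆ W) ∧
  (∀ a : F, ∀ α ∈ W, H.smul a α ⊆ W) ∧
  H.vzero ∈ W ∧
  (∀ α ∈ W, H.vneg α ∈ W)

/-- Iterated hyperoperation `A₁ # A₂ # ... # Aₙ` on a list of subsets
(by convention the empty hypersum is `{θ}`). -/
def hsum (H : HypervectorSpace F V K) : List (Set V) → Set V
  | [] => {H.vzero}
  | [A] => A
  | A :: B :: rest => H.setVadd A (HypervectorSpace.hsum H (B :: rest))

/-- The linear combination set `a₁∗α₁ # a₂∗α₂ # ... # aₙ∗αₙ`. -/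
def lincomb (H : HypervectorSpace F V K) {n : ℕ} (a : Fin n → F) (α : Fin n → V) : Set V :=
  H.hsum (List.ofFn fun i => H.smul (a i) (α i))

/-- The hyperlinear span `HL(α₁, ..., αₙ) = ⋃ { a₁∗α₁ # ... # aₙ∗αₙ : a₁, ..., aₙ ∈ F }`. -/
def HL (H : HypervectorSpace F V K) {n : ℕ} (α : Fin n → V) : Set V :=
  ⋃ a : Fin n → F, H.lincomb a α

/-- The family `α₁, ..., αₙ` is linearly dependent if `θ ∈ a₁∗α₁ # ... # aₙ∗αₙ`
for some scalars `a₁, ..., aₙ`, not all zero. -/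
def LinDep (H : HypervectorSpace F V K) {n : ℕ} (α : Fin n → V) : Prop :=
  ∃ a : Fin n → F, (∃ i, a i ≠ K.zero) ∧ H.vzero ∈ H.lincomb a α

/-- Strongly left distributive: equality `(a ⊕ b) ∗ α = a∗α # b∗α`. -/
def StronglyLeftDistrib (H : HypervectorSpace F V K) : Prop :=
  ∀ (a b : F) (x : V),
    (⋃ t ∈ K.add a b, H.smul t x) = ⋃ u ∈ H.smul a x, ⋃ w ∈ H.smul b x, H.vadd u w

/-- The set of all finite linear combinations of elements of `S`. -/
def HLSet (H : HypervectorSpace F V K) (S : Set V) : Set V :=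
  ⋃ n : ℕ, ⋃ β : Fin n → V, ⋃ (_ : ∀ i, β i ∈ S), H.HL β

/-- A set `S` is linearly independent if every finite family of distinct elements
of `S` is linearly independent. -/
def LinIndepSet (H : HypervectorSpace F V K) (S : Set V) : Prop :=
  ∀ (n : ℕ) (β : Fin n → V), Function.Injective β → (∀ i, β i ∈ S) → ¬ H.LinDep β

/-- `S` is a basis of the hypersubspace `U`: `S ⊆ U`, `S` is linearly independent,
and every element of `U` is a finite linear combination of elements of `S`. -/
def IsBasisOf (H : HypervectorSpace F V K) (S U : Set V) : Prop :=
  S ⊆ U ∧ H.LinIndepSet S ∧ U ⊆ H.HLSet S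

end HypervectorSpace

namespace HypervectorSpace

variable {F : Type u} {V : Type v} {K : Hyperfield F} (H : HypervectorSpace F V K)

lemma K_negneg (a : F) : K.neg (K.neg a) = a :=
  (K.neg_unique (K.neg a) a (K.neg_spec a).2 (K.neg_spec a).1).symm

lemma K_zero_add (z : F) : K.add K.zero z = {z} := by
  ext w
  constructor
  · intro hw
    have h1 := K.reversible w K.zero z hw
    have h2 : K.zero ∈ K.add (K.neg z) w := by rw [K.add_comm]; exact h1
    have := K.neg_unique (K.neg z) w h2 h1
    simpa [K_negneg] using this
  · intro hw
    rw [Set.mem_singleton_iff] at hw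
    subst hw
    have := K.reversible K.zero w (K.neg w) (K.neg_spec w).1
    simpa [K_negneg] using this

lemma K_neg_one_ne_zero : K.neg K.one ≠ K.zero := by
  intro h
  have h1 := (K.neg_spec K.one).1
  rw [h, K.add_comm, K_zero_add] at h1
  exact K.one_ne_zero h1.symm

lemma K_neg_eq_mul (a : F) : K.neg a = K.mul (K.neg K.one) a := by
  have key : K.zero ∈ K.add a (K.mul a (K.neg K.one)) := by
    have hd := K.left_distrib a K.one (K.neg K.one)
    rw [K.mul_one] at hd
    have : K.mul a K.zero ∈ (K.mul a) '' (K.add K.one (K.neg K.one)) :=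
      Set.mem_image_of_mem _ (K.neg_spec K.one).1
    rw [K.mul_zero, hd] at this
    exact this
  have key2 : K.zero ∈ K.add (K.mul a (K.neg K.one)) a := by rw [K.add_comm]; exact key
  have := K.neg_unique a (K.mul a (K.neg K.one)) key key2
  rw [← this, K.mul_comm]

lemma vnegneg (x : V) : H.vneg (H.vneg x) = x :=
  (H.vneg_unique (H.vneg x) x (H.vneg_spec x).2 (H.vneg_spec x).1).symm

lemma vzero_vadd (z : V) : H.vadd H.vzero z = {z} := by
  ext w
  constructor
  · intro hw
    have h1 := H.vreversible w H.vzero z hw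
    have h2 : H.vzero ∈ H.vadd (H.vneg z) w := by rw [H.vadd_comm]; exact h1
    have := H.vneg_unique (H.vneg z) w h2 h1
    simpa [vnegneg] using this
  · intro hw
    rw [Set.mem_singleton_iff] at hw
    subst hw
    have := H.vreversible H.vzero w (H.vneg w) (H.vneg_spec w).1
    simpa [vnegneg] using this

lemma vneg_vzero : H.vneg H.vzero = H.vzero := by
  have : H.vzero ∈ H.vadd H.vzero H.vzero := by rw [vzero_vadd]; rfl
  exact (H.vneg_unique H.vzero H.vzero this this).symm

lemma vneg_mem_vadd {x u w : V} (h : x ∈ H.vadd u w) :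
    H.vneg x ∈ H.vadd (H.vneg u) (H.vneg w) := by
  have h1 := H.vreversible x u w h
  rw [H.vadd_comm] at h1
  have h2 := H.vreversible u (H.vneg w) x h1
  rw [H.vadd_comm] at h2
  have h3 := H.vreversible (H.vneg w) (H.vneg x) u h2
  rw [H.vadd_comm] at h3
  exact h3

lemma smul_vzero (c : F) : H.smul c H.vzero = {H.vzero} := by
  have h := H.mul_smul c K.zero H.vzero
  rw [K.mul_zero, H.zero_smul] at h
  simpa using h.symm

lemma vneg_mem_smul_negone (x : V) : H.vneg x ∈ H.smul (K.neg K.one) x := by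
  have hsub := H.add_smul K.one (K.neg K.one) x
  have hz : H.vzero ∈ ⋃ t ∈ K.add K.one (K.neg K.one), H.smul t x := by
    refine Set.mem_iUnion.2 ⟨K.zero, Set.mem_iUnion.2 ⟨(K.neg_spec K.one).1, ?_⟩⟩
    rw [H.zero_smul]; rfl
  have := hsub hz
  simp only [Set.mem_iUnion, H.one_smul, Set.mem_singleton_iff] at this
  obtain ⟨u, hux, w, hw, hvw⟩ := this
  subst hux
  have h1 := H.vreversible H.vzero u w hvw
  rw [vzero_vadd, Set.mem_singleton_iff] at h1
  have h2 : H.vneg u = w := by rw [h1, vnegneg]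
  rw [h2]
  exact hw

lemma vneg_mem_smul_neg {c : F} {x u : V} (h : u ∈ H.smul c x) :
    H.vneg u ∈ H.smul (K.neg c) x := by
  rw [K_neg_eq_mul, H.mul_smul]
  exact Set.mem_iUnion.2 ⟨u, Set.mem_iUnion.2 ⟨h, vneg_mem_smul_negone H u⟩⟩

lemma mem_setVadd {A B : Set V} {x : V} :
    x ∈ H.setVadd A B ↔ ∃ a ∈ A, ∃ b ∈ B, x ∈ H.vadd a b := by
  simp [setVadd]

lemma setVadd_comm (A B : Set V) : H.setVadd A B = H.setVadd B A := by
  ext x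
  simp only [mem_setVadd]
  constructor
  · rintro ⟨a, ha, b, hb, hx⟩; exact ⟨b, hb, a, ha, by rwa [H.vadd_comm]⟩
  · rintro ⟨a, ha, b, hb, hx⟩; exact ⟨b, hb, a, ha, by rwa [H.vadd_comm]⟩

lemma setVadd_assoc (A B C : Set V) :
    H.setVadd (H.setVadd A B) C = H.setVadd A (H.setVadd B C) := by
  ext x
  simp only [mem_setVadd]
  constructor
  · rintro ⟨t, ⟨a, ha, b, hb, ht⟩, c, hc, hx⟩
    have key := H.vadd_assoc a b c
    have hx' : x ∈ ⋃ t ∈ H.vadd a b, H.vadd t c :=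
      Set.mem_iUnion.2 ⟨t, Set.mem_iUnion.2 ⟨ht, hx⟩⟩
    rw [← key] at hx'
    obtain ⟨s, hs, hx2⟩ := by simpa [Set.mem_iUnion] using hx'
    exact ⟨a, ha, s, ⟨b, hb, c, hc, hs⟩, hx2⟩
  · rintro ⟨a, ha, s, ⟨b, hb, c, hc, hs⟩, hx⟩
    have key := H.vadd_assoc a b c
    have hx' : x ∈ ⋃ t ∈ H.vadd b c, H.vadd a t :=
      Set.mem_iUnion.2 ⟨s, Set.mem_iUnion.2 ⟨hs, hx⟩⟩
    rw [key] at hx'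
    obtain ⟨t, ht, hx2⟩ := by simpa [Set.mem_iUnion] using hx'
    exact ⟨t, ⟨a, ha, b, hb, ht⟩, c, hc, hx2⟩

lemma setVadd_swap (A B C : Set V) :
    H.setVadd A (H.setVadd B C) = H.setVadd B (H.setVadd A C) := by
  rw [← setVadd_assoc, setVadd_comm H A B, setVadd_assoc]

lemma setVadd_mono {A A' B B' : Set V} (hA : A ⊆ A') (hB : B ⊆ B') :
    H.setVadd A B ⊆ H.setVadd A' B' := by
  intro x hx
  obtain ⟨a, ha, b, hb, hx⟩ := (mem_setVadd H).1 hx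
  exact (mem_setVadd H).2 ⟨a, hA ha, b, hB hb, hx⟩

lemma hsum_cons (A : Set V) (L : List (Set V)) :
    H.hsum (A :: L) = H.setVadd A (H.hsum L) := by
  cases L with
  | nil =>
    show A = H.setVadd A {H.vzero}
    ext x
    simp only [mem_setVadd, Set.mem_singleton_iff]
    constructor
    · intro hx
      refine ⟨x, hx, H.vzero, rfl, ?_⟩
      rw [H.vadd_comm, vzero_vadd]; rfl
    · rintro ⟨a, ha, b, rfl, hx⟩
      rw [H.vadd_comm, vzero_vadd] at hx
      rwa [hx]
  | cons B rest => rfl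

lemma hsum_ofFn_succAbove : ∀ (n : ℕ) (g : Fin (n + 1) → Set V) (i : Fin (n + 1)),
    H.hsum (List.ofFn g) = H.setVadd (g i) (H.hsum (List.ofFn (g ∘ i.succAbove))) := by
  intro n
  induction n with
  | zero =>
    intro g i
    have : i = 0 := Fin.fin_one_eq_zero i
    subst this
    show H.hsum [g 0] = H.setVadd (g 0) (H.hsum [])
    rw [← hsum_cons]
  | succ m ih =>
    intro g i
    induction i using Fin.cases with
    | zero =>
      rw [List.ofFn_succ, hsum_cons]
      have hfn : g ∘ (0 : Fin (m + 2)).succAbove = fun i : Fin (m + 1) => g i.succ := by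
        funext k
        simp [Fin.succAbove_zero]
      rw [hfn]
    | succ j =>
      rw [List.ofFn_succ, hsum_cons, ih (fun k => g k.succ) j, setVadd_swap]
      have hofn : List.ofFn (g ∘ (j.succ).succAbove) =
          (g 0) :: List.ofFn ((fun k => g k.succ) ∘ j.succAbove) := by
        rw [List.ofFn_succ]
        congr 1
        · exact congrArg List.ofFn (funext fun k => by
            show g (j.succ.succAbove k.succ) = g (j.succAbove k).succ
            rw [Fin.succ_succAbove_succ])
      rw [hofn, hsum_cons]

lemma hsum_ofFn_mono : ∀ {n : ℕ} {f g : Fin n → Set V}, (∀ i, f i ⊆ g i) →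
    H.hsum (List.ofFn f) ⊆ H.hsum (List.ofFn g) := by
  intro n
  induction n with
  | zero => intro f g _; exact subset_rfl
  | succ m ih =>
    intro f g h
    rw [List.ofFn_succ, List.ofFn_succ, hsum_cons, hsum_cons]
    exact setVadd_mono H (h 0) (ih fun k => h k.succ)

lemma hsum_ofFn_neg : ∀ {n : ℕ} {f : Fin n → Set V} {y : V}, y ∈ H.hsum (List.ofFn f) →
    H.vneg y ∈ H.hsum (List.ofFn fun i => H.vneg '' f i) := by
  intro n
  induction n with
  | zero =>
    intro f y hy
    have : y = H.vzero := hy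
    subst this
    show H.vneg H.vzero ∈ {H.vzero}
    rw [vneg_vzero]; rfl
  | succ m ih =>
    intro f y hy
    rw [List.ofFn_succ, hsum_cons] at hy ⊢
    obtain ⟨u, hu, w, hw, hy⟩ := (mem_setVadd H).1 hy
    exact (mem_setVadd H).2 ⟨H.vneg u, Set.mem_image_of_mem _ hu, H.vneg w,
      ih hw, vneg_mem_vadd H hy⟩

lemma smul_hsum (c : F) : ∀ {n : ℕ} {a : Fin n → F} {α : Fin n → V} {y : V},
    y ∈ H.hsum (List.ofFn fun i => H.smul (a i) (α i)) →
    H.smul c y ⊆ H.hsum (List.ofFn fun i => H.smul (K.mul c (a i)) (α i)) := by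
  intro n
  induction n with
  | zero =>
    intro a α y hy
    have : y = H.vzero := hy
    subst this
    rw [smul_vzero]
    exact subset_rfl
  | succ m ih =>
    intro a α y hy
    rw [List.ofFn_succ, hsum_cons] at hy ⊢
    obtain ⟨u, hu, w, hw, hy⟩ := (mem_setVadd H).1 hy
    have h1 : H.smul c y ⊆ ⋃ p ∈ H.smul c u, ⋃ q ∈ H.smul c w, H.vadd p q := by
      intro z hz
      exact H.smul_vadd c u w (Set.mem_iUnion.2 ⟨y, Set.mem_iUnion.2 ⟨hy, hz⟩⟩)
    have h2 : H.smul c u ⊆ H.smul (K.mul c (a 0)) (α 0) := by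
      rw [H.mul_smul]
      intro z hz
      exact Set.mem_iUnion.2 ⟨u, Set.mem_iUnion.2 ⟨hu, hz⟩⟩
    have h3 : H.smul c w ⊆
        H.hsum (List.ofFn fun i : Fin m => H.smul (K.mul c (a i.succ)) (α i.succ)) :=
      ih hw
    refine h1.trans ?_
    exact setVadd_mono H h2 h3

end HypervectorSpace
/-- A finite family `α₁, ..., αₙ` is linearly dependent iff at least one of its
members lies in the hyperlinear span of the remaining ones. -/
theorem HypervectorSpace.linDep_iff_mem_HL_remaining {F : Type u} {V : Type v}
    {K : Hyperfield F} (H : HypervectorSpace F V K) {n : ℕ}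
    (α : Fin (n + 1) → V) :
    H.LinDep α ↔ ∃ i : Fin (n + 1), α i ∈ H.HL (α ∘ i.succAbove) := by
  constructor
  · rintro ⟨a, ⟨i, hi⟩, hmem⟩
    obtain ⟨b, hb⟩ := K.exists_inv (a i) hi
    -- rescale so that the i-th coefficient is 1
    have hθ : H.vzero ∈ H.hsum (List.ofFn fun j => H.smul (K.mul b (a j)) (α j)) := by
      have := H.smul_hsum b (a := a) (α := α) hmem
      rw [smul_vzero] at this
      exact this rfl
    have hbi : K.mul b (a i) = K.one := by rw [K.mul_comm]; exact hb
    rw [H.hsum_ofFn_succAbove n (fun j => H.smul (K.mul b (a j)) (α j)) i] at hθ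
    obtain ⟨u, hu, w, hw, hvw⟩ := (H.mem_setVadd).1 hθ
    rw [hbi, H.one_smul, Set.mem_singleton_iff] at hu
    subst hu
    -- w is an element of the linear combination of the remaining vectors
    have h1 := H.vreversible H.vzero (α i) w hvw
    rw [H.vzero_vadd, Set.mem_singleton_iff] at h1
    refine ⟨i, ?_⟩
    rw [h1]
    -- vneg w lies in the span of the remaining vectors
    have hw' : H.vneg w ∈ H.hsum (List.ofFn fun k : Fin n =>
        H.vneg '' H.smul (K.mul b (a (i.succAbove k))) (α (i.succAbove k))) :=
      H.hsum_ofFn_neg hw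
    have hmono : H.hsum (List.ofFn fun k : Fin n =>
        H.vneg '' H.smul (K.mul b (a (i.succAbove k))) (α (i.succAbove k))) ⊆
        H.hsum (List.ofFn fun k : Fin n =>
        H.smul (K.neg (K.mul b (a (i.succAbove k)))) (α (i.succAbove k))) := by
      refine H.hsum_ofFn_mono fun k => ?_
      rintro z ⟨t, ht, rfl⟩
      exact H.vneg_mem_smul_neg ht
    refine Set.mem_iUnion.2 ⟨fun k => K.neg (K.mul b (a (i.succAbove k))), ?_⟩
    exact hmono hw'
  · rintro ⟨i, hs⟩
    obtain ⟨c, hc⟩ := Set.mem_iUnion.1 hs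
    set a : Fin (n + 1) → F := i.insertNth (K.neg K.one) c with ha
    have hai : a i = K.neg K.one := by rw [ha]; simp
    refine ⟨a, ⟨i, ?_⟩, ?_⟩
    · rw [hai]
      exact K_neg_one_ne_zero
    · show H.vzero ∈ H.hsum (List.ofFn fun j => H.smul (a j) (α j))
      rw [H.hsum_ofFn_succAbove n (fun j => H.smul (a j) (α j)) i]
      refine (H.mem_setVadd).2 ⟨H.vneg (α i), ?_, α i, ?_, (H.vneg_spec (α i)).2⟩
      · rw [hai]
        exact H.vneg_mem_smul_negone (α i)
      · have hfn : ((fun j => H.smul (a j) (α j)) ∘ i.succAbove)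
            = fun k : Fin n => H.smul (c k) ((α ∘ i.succAbove) k) := by
          funext k
          show H.smul (a (i.succAbove k)) (α (i.succAbove k)) = _
          rw [ha]
          rw [Fin.insertNth_apply_succAbove]
          rfl
        rw [hfn]
        exact hc
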